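/- There exists a copyless CRA over the max-plus semiring (ℕ ∪ {−∞}, max, +, −∞, 0) and the alphabet Σ = {a, b, #}, with two registers, that computes the function f_B defined as follows: for a word w ∈ Σ* written as w = w_0 # w_1 # … # w_k with each w_i ∈ {a,b}*, letting n_i be the number of a's in w_i and m_i the number of b's in w_i, f_B(w) = max_{0 ≤ j ≤ k} ( m_j + Σ_{i=j+1}^{k} n_i ), and f_B(ε) = 0. -/

import Mathlib

/-! ### Expressions over a semiring with variables -/

/-- Syntax trees of expressions over a semiring `S` with variables in `X`,
built from constants, variables, and the two semiring operations. -/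
inductive Expr (S X : Type) : Type where
  | const : S → Expr S X
  | var : X → Expr S X
  | add : Expr S X → Expr S X → Expr S X
  | mul : Expr S X → Expr S X → Expr S X

namespace Expr

variable {S X Y : Type}

/-- Evaluation of an expression under a valuation `ν : X → S`. -/
def eval [Add S] [Mul S] (ν : X → S) : Expr S X → S
  | const c => c
  | var x => ν x
  | add e₁ e₂ => e₁.eval ν + e₂.eval ν
  | mul e₁ e₂ => e₁.eval ν * e₂.eval ν

/-- Number of occurrences of the variable `x` in an expression. -/
def varCount [DecidableEq X] (x : X) : Expr S X → ℕ
  | const _ => 0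
  | var y => if y = x then 1 else 0
  | add e₁ e₂ => e₁.varCount x + e₂.varCount x
  | mul e₁ e₂ => e₁.varCount x + e₂.varCount x

/-- The set `Var(e)` of variables occurring in an expression. -/
def vars [DecidableEq X] : Expr S X → Finset X
  | const _ => ∅
  | var x => {x}
  | add e₁ e₂ => e₁.vars ∪ e₂.vars
  | mul e₁ e₂ => e₁.vars ∪ e₂.vars

/-- An expression is copyless if every variable occurs at most once in it. -/
def Copyless [DecidableEq X] (e : Expr S X) : Prop :=
  ∀ x : X, e.varCount x ≤ 1

/-- Substituting an expression `σ x` for each variable `x`. -/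
def subst (σ : X → Expr S Y) : Expr S X → Expr S Y
  | const c => const c
  | var x => σ x
  | add e₁ e₂ => add (e₁.subst σ) (e₂.subst σ)
  | mul e₁ e₂ => mul (e₁.subst σ) (e₂.subst σ)

/-- An expression never mentions the constant `0`. -/
def ZeroFree [Zero S] : Expr S X → Prop
  | const c => c ≠ (0 : S)
  | var _ => True
  | add e₁ e₂ => e₁.ZeroFree ∧ e₂.ZeroFree
  | mul e₁ e₂ => e₁.ZeroFree ∧ e₂.ZeroFree

/-- Number of constants mentioned in an expression. -/
def constCount : Expr S X → ℕ
  | const _ => 1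
  | var _ => 0
  | add e₁ e₂ => e₁.constCount + e₂.constCount
  | mul e₁ e₂ => e₁.constCount + e₂.constCount

/-- The top node of the expression is a `⊕`-node. -/
def isAddNode : Expr S X → Bool
  | add _ _ => true
  | _ => false

/-- The top node of the expression is a `⊙`-node. -/
def isMulNode : Expr S X → Bool
  | mul _ _ => true
  | _ => false

/-- The alternation `Alt(e)` of an expression: the maximal number of shifts
between `⊕` and `⊙` along branches of the parse tree. -/
def alt : Expr S X → ℕ
  | const _ => 0
  | var _ => 0
  | add e₁ e₂ =>
      max (e₁.alt + (if e₁.isMulNode then 1 else 0))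
          (e₂.alt + (if e₂.isMulNode then 1 else 0)) + 1
  | mul e₁ e₂ =>
      max (e₁.alt + (if e₁.isAddNode then 1 else 0))
          (e₂.alt + (if e₂.isAddNode then 1 else 0)) + 1

end Expr

/-! ### Substitutions -/

namespace Subs

variable {S X : Type}

/-- A substitution is copyless if each `σ x` is a copyless expression and
distinct registers use disjoint sets of variables. -/
def Copyless [DecidableEq X] (σ : X → Expr S X) : Prop :=
  (∀ x : X, (σ x).Copyless) ∧
    ∀ x y : X, x ≠ y → Disjoint ((σ x).vars) ((σ y).vars)

/-- Composition `σ ∘ τ` of substitutions: `(σ ∘ τ)(x) = σ̂(τ(x))`. -/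
def comp (σ τ : X → Expr S X) : X → Expr S X :=
  fun x => (τ x).subst σ

/-- The identity substitution. -/
def idS : X → Expr S X := fun x => Expr.var x

/-- `σ^n`, the `n`-fold composition of `σ` with itself. -/
def iterate (σ : X → Expr S X) : ℕ → (X → Expr S X)
  | 0 => idS
  | n + 1 => comp σ (iterate σ n)

/-- A substitution is in normal form w.r.t. the order on `X` if every variable
mentioned in `σ x` is at least `x`. -/
def NormalForm [DecidableEq X] [LE X] (σ : X → Expr S X) : Prop :=
  ∀ x y : X, y ∈ (σ x).vars → x ≤ y

/-- The register `x` is `σ`-stable, i.e. `x ∈ Var(σ x)`. -/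
def Stable [DecidableEq X] (σ : X → Expr S X) (x : X) : Prop :=
  x ∈ (σ x).vars

/-- A substitution is collapsing if every non-`σ`-stable register is mapped
to a variable-free (ground) expression. -/
def Collapsing [DecidableEq X] (σ : X → Expr S X) : Prop :=
  ∀ y : X, ¬ Stable σ y → (σ y).vars = ∅

end Subs

/-! ### Cost register automata -/

/-- A cost register automaton over semiring `S`, alphabet `A` and registers `X`. -/
structure CRA (S A X : Type) where
  Q : Type
  [finQ : Fintype Q]
  δ : Q → A → Q × (X → Expr S X)
  q0 : Q
  ν0 : X → S
  μ : Q → Expr S X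

attribute [instance] CRA.finQ

namespace CRA

variable {S A X : Type}

/-- One step of the run of a CRA on a letter. -/
def step [Add S] [Mul S] (M : CRA S A X) (c : M.Q × (X → S)) (a : A) : M.Q × (X → S) :=
  ((M.δ c.1 a).1, fun x => ((M.δ c.1 a).2 x).eval c.2)

/-- The configuration reached by the (unique) run of a CRA on a word. -/
def run [Add S] [Mul S] (M : CRA S A X) (w : List A) : M.Q × (X → S) :=
  w.foldl M.step (M.q0, M.ν0)

/-- The output `⟦M⟧(w)` of the CRA on the word `w`. -/
def output [Add S] [Mul S] (M : CRA S A X) (w : List A) : S :=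
  (M.μ (M.run w).1).eval (M.run w).2

/-- A CRA is copyless if all its transition substitutions and all its output
expressions are copyless. -/
def CopylessCRA [DecidableEq X] (M : CRA S A X) : Prop :=
  (∀ (q : M.Q) (a : A), Subs.Copyless (M.δ q a).2) ∧
    ∀ q : M.Q, (M.μ q).Copyless

/-- The transitive closure `δ*` of the transition function, composing the
substitutions along the word. -/
def deltaStar (M : CRA S A X) (q : M.Q) : List A → M.Q × (X → Expr S X)
  | [] => (q, Subs.idS)
  | a :: w =>
      ((M.deltaStar (M.δ q a).1 w).1,
        Subs.comp (M.δ q a).2 ((M.deltaStar (M.δ q a).1 w).2))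

/-- A CRA is in normal form if all its transition substitutions are. -/
def NormalFormCRA [DecidableEq X] [LE X] (M : CRA S A X) : Prop :=
  ∀ (q : M.Q) (a : A), Subs.NormalForm (M.δ q a).2

/-- A register is stable in `M` if it is stable on every substitution occurring
in `δ*`. -/
def StableIn [DecidableEq X] (M : CRA S A X) (x : X) : Prop :=
  ∀ (q : M.Q) (w : List A), Subs.Stable (M.deltaStar q w).2 x

/-- Every state of `M` is reachable from every state. -/
def StronglyConnected (M : CRA S A X) : Prop :=
  ∀ q q' : M.Q, ∃ w : List A, (M.deltaStar q w).1 = q'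

/-- The ground expression `ν0 ∘ σ1 ∘ … ∘ σn ∘ μ(qn)` arising from the run on `w`. -/
def groundExpr (M : CRA S A X) (w : List A) : Expr S X :=
  ((M.μ (M.deltaStar M.q0 w).1).subst ((M.deltaStar M.q0 w).2)).subst
    (fun x => Expr.const (M.ν0 x))

/-- The CRA has bounded alternation: the alternation of all ground output
expressions is uniformly bounded. -/
def BoundedAlt (M : CRA S A X) : Prop :=
  ∃ N : ℕ, ∀ w : List A, (M.groundExpr w).alt ≤ N

end CRA
/-! ### The max-plus semiring `(ℕ ∪ {−∞}, max, +, −∞, 0)` -/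

/-- The carrier `ℕ ∪ {−∞}` of the max-plus semiring. -/
inductive MaxPlus : Type where
  | neginf : MaxPlus
  | nat : ℕ → MaxPlus
  deriving DecidableEq

namespace MaxPlus

/-- Semiring addition: `max`, with `−∞` neutral. -/
def addFn : MaxPlus → MaxPlus → MaxPlus
  | neginf, y => y
  | x, neginf => x
  | nat m, nat n => nat (max m n)

/-- Semiring multiplication: `+`, with `−∞` absorbing. -/
def mulFn : MaxPlus → MaxPlus → MaxPlus
  | neginf, _ => neginf
  | _, neginf => neginf
  | nat m, nat n => nat (m + n)

instance : Add MaxPlus := ⟨addFn⟩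
instance : Mul MaxPlus := ⟨mulFn⟩
instance : Zero MaxPlus := ⟨neginf⟩
instance : One MaxPlus := ⟨nat 0⟩

end MaxPlus

/-! ### The alphabet `Σ = {a, b, #}` -/

inductive ABH : Type where
  | a : ABH
  | b : ABH
  | hash : ABH
  deriving DecidableEq

instance : Fintype ABH :=
  ⟨{ABH.a, ABH.b, ABH.hash}, fun x => by cases x <;> simp⟩

/-- The function `f_B`: for `w = w_0 # w_1 # … # w_k` with `w_i ∈ {a,b}*`,
`f_B(w) = max_{0 ≤ j ≤ k} ( m_j + Σ_{i=j+1}^{k} n_i )` where `n_i, m_i` are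
the numbers of `a`'s resp. `b`'s in `w_i` (and `f_B(ε) = 0`). -/
def fB (w : List ABH) : MaxPlus :=
  let bs := w.splitOn ABH.hash
  MaxPlus.nat <|
    Finset.sup (Finset.range bs.length) fun j =>
      (bs.getD j []).count ABH.b + ((bs.drop (j + 1)).map fun u => u.count ABH.a).sum

/-! ### STATEMENT 10
There is a copyless CRA over the max-plus semiring and `Σ = {a, b, #}` with two
registers that computes `f_B`. -/

namespace MaxPlusProof

open MaxPlus Expr

@[simp] lemma mp_neginf_add (x : MaxPlus) : neginf + x = x := by cases x <;> rfl
@[simp] lemma mp_add_neginf (x : MaxPlus) : x + neginf = x := by cases x <;> rfl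
@[simp] lemma mp_nat_add (m n : ℕ) : nat m + nat n = nat (max m n) := rfl
@[simp] lemma mp_neginf_mul (x : MaxPlus) : neginf * x = neginf := by cases x <;> rfl
@[simp] lemma mp_nat_mul (m n : ℕ) : nat m * nat n = nat (m + n) := rfl
@[simp] lemma mp_mul_nat_zero (x : MaxPlus) : x * nat 0 = x := by cases x <;> simp
lemma mp_mul_nat_assoc (x : MaxPlus) (m n : ℕ) :
    x * nat m * nat n = x * nat (m + n) := by
  cases x <;> simp [Nat.add_assoc]
lemma mp_add_distrib (x : MaxPlus) (y c : ℕ) :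
    (x + nat y) * nat c = x * nat c + nat (y + c) := by
  cases x with
  | neginf => rfl
  | nat m => show nat _ = nat _; congr 1; omega
lemma mp_add_assoc (x y z : MaxPlus) : x + y + z = x + (y + z) := by
  cases x <;> cases y <;> cases z <;> simp [Nat.max_assoc]
lemma mp_add_comm (x y : MaxPlus) : x + y = y + x := by
  cases x <;> cases y <;> simp [Nat.max_comm]

/-- The max-plus CRA: register 0 = running max over completed blocks,
register 1 = b-count of current block. -/
def M : CRA MaxPlus ABH (Fin 2) where
  Q := Unit
  δ := fun _ c =>
    ((), match c with
      | ABH.a => ![Expr.mul (Expr.var 0) (Expr.const (nat 1)), Expr.var 1]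
      | ABH.b => ![Expr.var 0, Expr.mul (Expr.var 1) (Expr.const (nat 1))]
      | ABH.hash => ![Expr.add (Expr.var 0) (Expr.var 1), Expr.const (nat 0)])
  q0 := ()
  ν0 := ![neginf, nat 0]
  μ := fun _ => Expr.add (Expr.var 0) (Expr.var 1)

/-- Spec of register 0 along the run. -/
def specX (x : MaxPlus) (y : ℕ) : List ABH → MaxPlus
  | [] => x
  | ABH.a :: w => specX (x * nat 1) y w
  | ABH.b :: w => specX x (y + 1) w
  | ABH.hash :: w => specX (x + nat y) 0 w

/-- Spec of register 1 along the run. -/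
def specY (y : ℕ) : List ABH → ℕ
  | [] => y
  | ABH.a :: w => specY y w
  | ABH.b :: w => specY (y + 1) w
  | ABH.hash :: w => specY 0 w

lemma run_spec (w : List ABH) : ∀ (x : MaxPlus) (y : ℕ),
    (w.foldl M.step ((), ![x, nat y])).2 = ![specX x y w, nat (specY y w)] := by
  induction w with
  | nil => intro x y; rfl
  | cons c w ih =>
    intro x y
    have hstep : M.step ((), ![x, nat y]) c =
        ((), match c with
          | ABH.a => ![x * nat 1, nat y]
          | ABH.b => ![x, nat y * nat 1]
          | ABH.hash => ![x + nat y, nat 0]) := by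
      cases c <;> · refine Prod.ext rfl ?_
                    funext i
                    fin_cases i <;> rfl
    cases c <;>
      simp only [List.foldl_cons, hstep, specX, specY] <;>
      [exact ih _ _; (rw [show nat y * nat 1 = nat (y + 1) from rfl]; exact ih _ _);
       exact ih _ _]

/-- shift the sup over a range by one -/
lemma sup_range_shift (n : ℕ) (f : ℕ → ℕ) :
    (Finset.range (n + 1)).sup f = f 0 ⊔ (Finset.range n).sup (fun j => f (j + 1)) := by
  induction n with
  | zero => simp
  | succ n ih =>
    rw [Finset.range_add_one, Finset.sup_insert, ih,
      show Finset.range (n + 1) = insert n (Finset.range n) from Finset.range_add_one,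
      Finset.sup_insert]
    rw [← sup_assoc, ← sup_assoc, sup_comm (f (n+1)) (f 0)]

/-- The `F` quantity: value of `fB`-style sup with `y` extra `b`'s in block 0. -/
def F (y : ℕ) (bs : List (List ABH)) : ℕ :=
  (Finset.range bs.length).sup fun j =>
    (if j = 0 then y else 0) + (bs.getD j []).count ABH.b +
      ((bs.drop (j + 1)).map fun u => u.count ABH.a).sum


lemma splitOn_cons_a (w : List ABH) :
    (ABH.a :: w).splitOn ABH.hash = (w.splitOn ABH.hash).modifyHead (List.cons ABH.a) := by
  simp [List.splitOn, List.splitOnP_cons]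

lemma splitOn_cons_b (w : List ABH) :
    (ABH.b :: w).splitOn ABH.hash = (w.splitOn ABH.hash).modifyHead (List.cons ABH.b) := by
  simp [List.splitOn, List.splitOnP_cons]

lemma splitOn_cons_hash (w : List ABH) :
    (ABH.hash :: w).splitOn ABH.hash = [] :: w.splitOn ABH.hash := by
  simp [List.splitOn, List.splitOnP_cons]

lemma splitOn_ne_nil' (w : List ABH) : w.splitOn ABH.hash ≠ [] :=
  List.splitOnP_ne_nil _ w

lemma sumA_splitOn (w : List ABH) :
    (((w.splitOn ABH.hash).map fun u => u.count ABH.a).sum) = w.count ABH.a := by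
  induction w with
  | nil => simp [List.splitOn]
  | cons c w ih =>
    obtain ⟨h, t, hw⟩ := List.exists_cons_of_ne_nil (splitOn_ne_nil' w)
    cases c
    · rw [splitOn_cons_a, hw, List.modifyHead_cons, List.count_cons]
      rw [hw] at ih
      simp at ih ⊢
      omega
    · rw [splitOn_cons_b, hw, List.modifyHead_cons, List.count_cons]
      rw [hw] at ih
      simp at ih ⊢
      omega
    · rw [splitOn_cons_hash, hw, List.count_cons]
      rw [hw] at ih
      simp at ih ⊢
      omega

lemma main (w : List ABH) : ∀ (x : MaxPlus) (y : ℕ),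
    specX x y w + nat (specY y w) =
      x * nat (w.count ABH.a) + nat (F y (w.splitOn ABH.hash)) := by
  induction w with
  | nil =>
    intro x y
    simp [specX, specY, List.splitOn, F]
  | cons c w ih =>
    intro x y
    obtain ⟨h, t, hw⟩ := List.exists_cons_of_ne_nil
      (List.splitOnP_ne_nil (· == ABH.hash) w)
    have hsplit : w.splitOn ABH.hash = h :: t := hw
    cases c with
    | a =>
      have hF : F y ((ABH.a :: h) :: t) = F y (h :: t) := by
        unfold F
        apply Finset.sup_congr rfl
        intro j hj
        match j with
        | 0 => simp
        | j + 1 => simp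
      rw [specX, specY, ih, splitOn_cons_a, hsplit, List.modifyHead_cons, hF,
        List.count_cons, mp_mul_nat_assoc]
      simp [Nat.add_comm]
    | b =>
      have hF : F (y + 1) (h :: t) = F y ((ABH.b :: h) :: t) := by
        unfold F
        apply Finset.sup_congr rfl
        intro j hj
        match j with
        | 0 => simp; omega
        | j + 1 => simp
      rw [specX, specY, ih, splitOn_cons_b, hsplit, List.modifyHead_cons, ← hF,
        List.count_cons]
      simp
    | hash =>
      have hlen : t.length = (h :: t).length - 1 := rfl
      have hF : F y (([] : List ABH) :: h :: t) =
          (y + w.count ABH.a) ⊔ F 0 (h :: t) := by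
        unfold F
        rw [show (([] : List ABH) :: h :: t).length = (h :: t).length + 1 from rfl,
          sup_range_shift]
        congr 1
        · simp only [List.getD]
          have hs := sumA_splitOn w
          rw [hsplit] at hs
          simp at hs ⊢
          omega
        · apply Finset.sup_congr rfl
          intro j hj
          simp
      rw [specX, specY, ih, splitOn_cons_hash, hsplit, List.count_cons]
      simp only [show (ABH.hash == ABH.a) = false from rfl, if_false,
        Bool.false_eq_true, Nat.add_zero]
      rw [hF, mp_add_distrib, mp_add_assoc]
      congr 1

lemma output_eq (w : List ABH) : M.output w = fB w := by
  have hrun : (M.run w).2 = ![specX neginf 0 w, nat (specY 0 w)] := by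
    have := run_spec w neginf 0
    unfold CRA.run
    convert this using 2
    rfl
  have : M.output w = specX neginf 0 w + nat (specY 0 w) := by
    unfold CRA.output
    rw [hrun]
    rfl
  rw [this, main w neginf 0]
  simp only [mp_neginf_mul, mp_neginf_add]
  unfold fB F
  congr 1
  apply Finset.sup_congr rfl
  intro j hj
  simp

lemma copyless : M.CopylessCRA := by
  constructor
  · rintro ⟨⟩ c
    cases c <;> unfold Subs.Copyless Expr.Copyless <;>
      refine ⟨by decide, fun x y hxy => ?_⟩ <;>
      · fin_cases x <;> fin_cases y <;>
          first
          | exact absurd rfl hxy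
          | simp [M, Expr.vars, Finset.disjoint_left]
  · rintro ⟨⟩
    intro x
    fin_cases x <;> decide

end MaxPlusProof

theorem exists_copyless_CRA_computing_fB :
    ∃ M : CRA MaxPlus ABH (Fin 2),
      M.CopylessCRA ∧ ∀ w : List ABH, M.output w = fB w :=
  ⟨MaxPlusProof.M, MaxPlusProof.copyless, MaxPlusProof.output_eq⟩
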